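/- If the edge set of a finite simple graph G = (V,E) is partitioned into k pseudoforests, then E can be partitioned into ⌈4k/3⌉ forests. -/

import Mathlib

open SimpleGraph

/-- An edge set spans a forest if the graph it spans contains no cycle. -/
def IsForestSet {V : Type*} (F : Set (Sym2 V)) : Prop :=
  (SimpleGraph.fromEdgeSet F).IsAcyclic

/-- A simple graph is a pseudoforest if every connected component contains at most one
cycle, i.e., any two cycles lying in the same connected component have the same edges. -/
def GraphIsPseudoforest {V : Type*} (H : SimpleGraph V) : Prop :=
  ∀ ⦃u v : V⦄ (c : H.Walk u u) (d : H.Walk v v),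
    c.IsCycle → d.IsCycle → H.Reachable u v → ∀ e : Sym2 V, e ∈ c.edges ↔ e ∈ d.edges

/-- An edge set is a pseudoforest if every connected component of the graph it spans
contains at most one cycle. -/
def IsPseudoforestSet {V : Type*} (P : Set (Sym2 V)) : Prop :=
  GraphIsPseudoforest (SimpleGraph.fromEdgeSet P)

/-- A partition of the edge set of `G` into `k` forests. -/
def IsForestPartition {V : Type*} (G : SimpleGraph V) (k : ℕ)
    (F : Fin k → Set (Sym2 V)) : Prop :=
  (∀ i, IsForestSet (F i)) ∧ (Pairwise fun i j => Disjoint (F i) (F j)) ∧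
    (⋃ i, F i) = G.edgeSet

/-- A partition of the edge set of `G` into `k` pseudoforests. -/
def IsPseudoforestPartition {V : Type*} (G : SimpleGraph V) (k : ℕ)
    (P : Fin k → Set (Sym2 V)) : Prop :=
  (∀ i, IsPseudoforestSet (P i)) ∧ (Pairwise fun i j => Disjoint (P i) (P j)) ∧
    (⋃ i, P i) = G.edgeSet

set_option linter.unusedSectionVars false

namespace PFAux

variable {V : Type*} [DecidableEq V]

lemma sym2_exists_eq (e : Sym2 V) : ∃ a b : V, e = s(a, b) :=
  Sym2.ind (fun a b => ⟨a, b, rfl⟩) e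

lemma acyclic_anti {G H : SimpleGraph V} (h : G ≤ H) (hH : H.IsAcyclic) : G.IsAcyclic := by
  intro v c hc
  exact hH (c.mapLe h) ((Walk.mapLe_isCycle h).mpr hc)

lemma edges_mapLe {G H : SimpleGraph V} (h : G ≤ H) {u v : V} (p : G.Walk u v) :
    (p.mapLe h).edges = p.edges := by
  induction p with
  | nil => rfl
  | cons h p ih =>
    simp only [Walk.mapLe, Walk.map_cons, Walk.edges_cons] at ih ⊢
    rw [ih]
    simp [Sym2.map_pair_eq]

lemma pseudoforest_anti {G H : SimpleGraph V} (h : G ≤ H) (hH : GraphIsPseudoforest H) :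
    GraphIsPseudoforest G := by
  intro u v c d hc hd hr e
  have := hH (c.mapLe h) (d.mapLe h) ((Walk.mapLe_isCycle h).mpr hc)
    ((Walk.mapLe_isCycle h).mpr hd) (hr.mono h) e
  rwa [edges_mapLe, edges_mapLe] at this

lemma acyclic_pseudoforest {G : SimpleGraph V} (h : G.IsAcyclic) : GraphIsPseudoforest G :=
  fun _ _ c _ hc _ _ _ => absurd hc (h c)

/-- Adding an edge between two vertices that are already reachable does not change
reachability. -/
lemma reachable_sup_edge {G : SimpleGraph V} {x y : V} (hr : G.Reachable x y) {u v : V} :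
    (G ⊔ fromEdgeSet {s(x, y)}).Reachable u v ↔ G.Reachable u v := by
  constructor
  · rintro ⟨w⟩
    induction w with
    | nil => exact Reachable.refl _
    | cons h p ih =>
      refine Reachable.trans ?_ ih
      rcases (sup_adj _ _ _ _).mp h with h' | h'
      · exact h'.reachable
      · rw [fromEdgeSet_adj] at h'
        rcases Sym2.eq_iff.mp (Set.mem_singleton_iff.mp h'.1) with ⟨rfl, rfl⟩ | ⟨rfl, rfl⟩
        · exact hr
        · exact hr.symm
  · exact fun h => h.mono le_sup_left

lemma sup_edge_sdiff {G : SimpleGraph V} {e : Sym2 V} (he : e ∉ G.edgeSet) :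
    (G ⊔ fromEdgeSet {e}) \ fromEdgeSet {e} = G := by
  ext a b
  simp only [sdiff_adj, sup_adj, fromEdgeSet_adj, Set.mem_singleton_iff]
  constructor
  · rintro ⟨h1 | h1, h2⟩
    · exact h1
    · exact absurd h1 h2
  · intro h
    refine ⟨Or.inl h, fun hc => ?_⟩
    exact he (hc.1 ▸ h)

/-- Adding an edge between two vertices that are not reachable keeps the graph acyclic. -/
lemma isAcyclic_sup_edge {G : SimpleGraph V} {x y : V} (hxy : x ≠ y)
    (hG : G.IsAcyclic) (hr : ¬ G.Reachable x y) :
    (G ⊔ fromEdgeSet {s(x, y)}).IsAcyclic := by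
  intro v c hc
  by_cases he : s(x, y) ∈ c.edges
  · have hGe : s(x, y) ∉ G.edgeSet := fun h => hr ((G.mem_edgeSet).mp h).reachable
    have h2 := (adj_and_reachable_delete_edges_iff_exists_cycle
        (G := G ⊔ fromEdgeSet {s(x, y)})).mpr ⟨v, c, hc, he⟩
    rw [SimpleGraph.deleteEdges, sup_edge_sdiff hGe] at h2
    exact hr h2.2
  · have hsub : ∀ e' ∈ c.edges, e' ∈ G.edgeSet := by
      intro e' he'
      have h3 := c.edges_subset_edgeSet he'
      rw [edgeSet_sup, edgeSet_fromEdgeSet] at h3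
      rcases h3 with h1 | h1
      · exact h1
      · exact absurd (Set.mem_singleton_iff.mp h1.1 ▸ he') he
    exact hG (c.transfer G hsub) (hc.transfer hsub)

/-- every edge of a walk ending at `x` has both endpoints reachable to `x`. -/
lemma walk_edge_reach {G : SimpleGraph V} {u x : V} (w : G.Walk u x) :
    ∀ e ∈ w.edges, ∀ v ∈ e, G.Reachable v x := by
  induction w with
  | nil => simp
  | @cons a c _ h p ih =>
    intro e he v hv
    rcases List.mem_cons.mp he with rfl | he'
    · rcases Sym2.mem_iff.mp hv with rfl | rfl
      · exact ⟨Walk.cons h p⟩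
      · exact ⟨p⟩
    · exact ih e he' v hv

end PFAux

namespace PFAux

open scoped Classical

variable {V : Type*} [DecidableEq V] [Fintype V]

noncomputable def supp (Q : Finset (Sym2 V)) : Finset V :=
  Finset.univ.filter (fun v => ∃ e ∈ Q, v ∈ e)

lemma mem_supp {Q : Finset (Sym2 V)} {v : V} : v ∈ supp Q ↔ ∃ e ∈ Q, v ∈ e := by
  simp [supp]

lemma supp_subset {Q R : Finset (Sym2 V)} (h : Q ⊆ R) : supp Q ⊆ supp R := by
  intro v hv
  obtain ⟨e, he, hve⟩ := mem_supp.mp hv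
  exact mem_supp.mpr ⟨e, h he, hve⟩

lemma supp_empty : supp (∅ : Finset (Sym2 V)) = ∅ := by
  ext v; simp [mem_supp]

noncomputable def compE (Q : Finset (Sym2 V)) (x : V) : Finset (Sym2 V) :=
  Q.filter (fun e => ∀ v ∈ e, (fromEdgeSet ↑Q).Reachable v x)

lemma compE_subset {Q : Finset (Sym2 V)} {x : V} : compE Q x ⊆ Q := Finset.filter_subset _ _

lemma mem_compE {Q : Finset (Sym2 V)} {x : V} {e : Sym2 V} :
    e ∈ compE Q x ↔ e ∈ Q ∧ ∀ v ∈ e, (fromEdgeSet ↑Q).Reachable v x := Finset.mem_filter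

lemma reach_compE {Q : Finset (Sym2 V)} {x u : V} (hu : (fromEdgeSet (↑Q : Set (Sym2 V))).Reachable u x) :
    (fromEdgeSet ↑(compE Q x)).Reachable u x := by
  obtain ⟨w⟩ := hu
  refine ⟨w.transfer _ ?_⟩
  intro e he
  have h1 := w.edges_subset_edgeSet he
  rw [edgeSet_fromEdgeSet] at h1 ⊢
  refine ⟨?_, h1.2⟩
  exact Finset.mem_coe.mpr (mem_compE.mpr ⟨Finset.mem_coe.mp h1.1, walk_edge_reach w e he⟩)

lemma fromEdgeSet_erase (Q : Finset (Sym2 V)) (e : Sym2 V) :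
    fromEdgeSet ↑(Q.erase e) = fromEdgeSet ↑Q \ fromEdgeSet {e} := by
  rw [Finset.coe_erase, ← fromEdgeSet_sdiff]

lemma reach_or_reach_erase {Q : Finset (Sym2 V)} {a b u : V}
    (w : (fromEdgeSet (↑Q : Set (Sym2 V))).Walk u a) :
    (fromEdgeSet ↑(Q.erase s(a, b))).Reachable u a ∨
      (fromEdgeSet ↑(Q.erase s(a, b))).Reachable u b := by
  induction w with
  | nil => exact Or.inl (Reachable.refl _)
  | @cons x y z h t ih =>
    by_cases hec : s(x, y) = s(z, b)
    · rcases Sym2.eq_iff.mp hec with ⟨rfl, rfl⟩ | ⟨rfl, rfl⟩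
      · exact Or.inl (Reachable.refl _)
      · exact Or.inr (Reachable.refl _)
    · have h' := (fromEdgeSet_adj _).mp h
      have hadj : (fromEdgeSet ↑(Q.erase s(z, b))).Adj x y := by
        rw [fromEdgeSet_adj]
        refine ⟨?_, h'.2⟩
        rw [Finset.coe_erase]
        exact ⟨h'.1, hec⟩
      rcases ih with h1 | h1
      · exact Or.inl (hadj.reachable.trans h1)
      · exact Or.inr (hadj.reachable.trans h1)

end PFAux

namespace PFAux

open scoped Classical

variable {V : Type*} [DecidableEq V] [Fintype V]

/-- A connected vertex set `U` spanned by edges `Q` needs at least `|U| - 1` edges. -/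
lemma card_le_of_connected : ∀ (Q : Finset (Sym2 V)) (U : Finset V),
    (∀ e ∈ Q, ¬ e.IsDiag) → (∀ e ∈ Q, ∀ v ∈ e, v ∈ U) →
    (∀ u ∈ U, ∀ v ∈ U, (fromEdgeSet (↑Q : Set (Sym2 V))).Reachable u v) →
    U.card ≤ Q.card + 1 := by
  intro Q
  induction Q using Finset.strongInduction with
  | _ Q IH =>
    intro U hdiag hin hconn
    by_cases hU1 : U.card ≤ 1
    · omega
    push_neg at hU1
    obtain ⟨u0, hu0, v0, hv0, huv⟩ := Finset.one_lt_card.mp hU1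
    rcases Finset.eq_empty_or_nonempty Q with rfl | hQne
    · exfalso
      obtain ⟨w⟩ := hconn u0 hu0 v0 hv0
      cases w with
      | nil => exact huv rfl
      | cons h p =>
        have := (fromEdgeSet_adj _).mp h
        simp at this
    obtain ⟨e, heQ⟩ := hQne
    obtain ⟨a, b, rfl⟩ := sym2_exists_eq e
    have hab : a ≠ b := fun h => hdiag _ heQ (by simp [h])
    have haU : a ∈ U := hin _ heQ a (by simp)
    have hbU : b ∈ U := hin _ heQ b (by simp)
    set Q' := Q.erase s(a, b) with hQ'def
    have hQ'ss : Q' ⊂ Q := Finset.erase_ssubset heQ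
    have hQ'diag : ∀ e ∈ Q', ¬ e.IsDiag := fun e he => hdiag e (Finset.mem_of_mem_erase he)
    have hQ'in : ∀ e ∈ Q', ∀ v ∈ e, v ∈ U := fun e he => hin e (Finset.mem_of_mem_erase he)
    have hcard : Q'.card = Q.card - 1 := Finset.card_erase_of_mem heQ
    have hQpos : 1 ≤ Q.card := Finset.card_pos.mpr ⟨_, heQ⟩
    by_cases hall : ∀ u ∈ U, ∀ v ∈ U, (fromEdgeSet (↑Q' : Set (Sym2 V))).Reachable u v
    · have := IH Q' hQ'ss U hQ'diag hQ'in hall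
      omega
    · have hnr : ¬ (fromEdgeSet (↑Q' : Set (Sym2 V))).Reachable a b := by
        intro hr
        apply hall
        have ha' : ∀ w ∈ U, (fromEdgeSet (↑Q' : Set (Sym2 V))).Reachable w a := by
          intro w hw
          obtain ⟨wk⟩ := hconn w hw a haU
          rcases reach_or_reach_erase (b := b) wk with h1 | h1
          · exact h1
          · exact h1.trans hr.symm
        intro u hu v hv
        exact (ha' u hu).trans (ha' v hv).symm
      set A := U.filter (fun v => (fromEdgeSet (↑Q' : Set (Sym2 V))).Reachable v a) with hAdef
      set B := U.filter (fun v => ¬ (fromEdgeSet (↑Q' : Set (Sym2 V))).Reachable v a) with hBdef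
      set QA := compE Q' a with hQAdef
      set QB := Q' \ QA with hQBdef
      have hQAss : QA ⊆ Q' := compE_subset
      have hQBss : QB ⊆ Q' := Finset.sdiff_subset
      -- every vertex of U reaches a or b in Q'
      have hUor : ∀ u ∈ U, (fromEdgeSet (↑Q' : Set (Sym2 V))).Reachable u a ∨
          (fromEdgeSet (↑Q' : Set (Sym2 V))).Reachable u b := by
        intro u hu
        obtain ⟨wk⟩ := hconn u hu a haU
        exact reach_or_reach_erase (b := b) wk
      -- part 1 : A vs QA
      have h1 : A.card ≤ QA.card + 1 := by
        refine IH QA (Finset.ssubset_of_subset_of_ssubset hQAss hQ'ss) A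
          (fun e he => hQ'diag e (hQAss he)) ?_ ?_
        · intro e he v hv
          rw [Finset.mem_filter]
          exact ⟨hQ'in e (hQAss he) v hv, (mem_compE.mp he).2 v hv⟩
        · intro u hu v hv
          rw [hAdef, Finset.mem_filter] at hu hv
          exact (reach_compE hu.2).trans (reach_compE hv.2).symm
      -- part 2 : B vs QB
      have h2 : B.card ≤ QB.card + 1 := by
        refine IH QB (Finset.ssubset_of_subset_of_ssubset hQBss hQ'ss) B
          (fun e he => hQ'diag e (hQBss he)) ?_ ?_
        · intro e he v hv
          obtain ⟨c, d, rfl⟩ := sym2_exists_eq e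
          have hcd : c ≠ d := fun h => hQ'diag _ (hQBss he) (by simp [h])
          have hadj : (fromEdgeSet (↑Q' : Set (Sym2 V))).Adj c d :=
            (fromEdgeSet_adj _).mpr ⟨Finset.mem_coe.mpr (hQBss he), hcd⟩
          have hnc : ¬ (fromEdgeSet (↑Q' : Set (Sym2 V))).Reachable c a := by
            intro hc
            have hall' : ∀ v ∈ s(c, d), (fromEdgeSet (↑Q' : Set (Sym2 V))).Reachable v a := by
              intro v hv
              rcases Sym2.mem_iff.mp hv with rfl | rfl
              · exact hc
              · exact hadj.symm.reachable.trans hc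
            have : s(c, d) ∈ QA := mem_compE.mpr ⟨hQBss he, hall'⟩
            rw [hQBdef] at he
            exact (Finset.mem_sdiff.mp he).2 this
          have hnd : ¬ (fromEdgeSet (↑Q' : Set (Sym2 V))).Reachable d a :=
            fun hd => hnc (hadj.reachable.trans hd)
          rw [hBdef, Finset.mem_filter]
          rcases Sym2.mem_iff.mp hv with rfl | rfl
          · exact ⟨hQ'in _ (hQBss he) v (by simp), hnc⟩
          · exact ⟨hQ'in _ (hQBss he) v (by simp), hnd⟩
        · intro u hu v hv
          rw [hBdef, Finset.mem_filter] at hu hv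
          have hub : (fromEdgeSet (↑Q' : Set (Sym2 V))).Reachable u b :=
            (hUor u hu.1).resolve_left hu.2
          have hvb : (fromEdgeSet (↑Q' : Set (Sym2 V))).Reachable v b :=
            (hUor v hv.1).resolve_left hv.2
          have hsub : compE Q' b ⊆ QB := by
            intro e he
            rw [hQBdef, Finset.mem_sdiff]
            refine ⟨compE_subset he, fun heA => ?_⟩
            obtain ⟨c, d, rfl⟩ := sym2_exists_eq e
            have h3 := (mem_compE.mp he).2 c (by simp)
            have h4 := (mem_compE.mp heA).2 c (by simp)
            exact hnr (h4.symm.trans h3)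
          have hm : fromEdgeSet (↑(compE Q' b) : Set (Sym2 V)) ≤ fromEdgeSet ↑QB :=
            fromEdgeSet_mono (Finset.coe_subset.mpr hsub)
          exact ((reach_compE hub).mono hm).trans (((reach_compE hvb).mono hm)).symm
      have hUAB : A.card + B.card = U.card := Finset.card_filter_add_card_filter_not _
      have hQAB : QA.card + QB.card = Q'.card := by
        rw [hQBdef, Finset.card_sdiff_of_subset hQAss]
        have hle := Finset.card_le_card hQAss
        omega
      omega

end PFAux

namespace PFAux

open scoped Classical

variable {V : Type*} [DecidableEq V] [Fintype V]

/-- An acyclic edge set whose support is all connected to a pivot `x` has at most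
`|supp| - 1` edges. -/
lemma acyclic_card : ∀ (Q : Finset (Sym2 V)) (x : V),
    (∀ e ∈ Q, ¬ e.IsDiag) → (fromEdgeSet (↑Q : Set (Sym2 V))).IsAcyclic →
    (∀ u ∈ supp Q, (fromEdgeSet (↑Q : Set (Sym2 V))).Reachable u x) →
    Q.card + 1 ≤ (supp Q ∪ {x}).card := by
  intro Q
  induction Q using Finset.strongInduction with
  | _ Q IH =>
    intro x hdiag hacyc hconn
    rcases Finset.eq_empty_or_nonempty Q with rfl | hQne
    · simp [supp_empty]
    obtain ⟨e, heQ⟩ := hQne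
    obtain ⟨a, b, rfl⟩ := sym2_exists_eq e
    have hab : a ≠ b := fun h => hdiag _ heQ (by simp [h])
    have haS : a ∈ supp Q := mem_supp.mpr ⟨s(a, b), heQ, by simp⟩
    have hbS : b ∈ supp Q := mem_supp.mpr ⟨s(a, b), heQ, by simp⟩
    set Q' := Q.erase s(a, b) with hQ'def
    have hQ'ss : Q' ⊂ Q := Finset.erase_ssubset heQ
    have hQ'sub : Q' ⊆ Q := Finset.erase_subset _ _
    have hnr : ¬ (fromEdgeSet (↑Q' : Set (Sym2 V))).Reachable a b := by
      intro hr
      have hadj : (fromEdgeSet (↑Q : Set (Sym2 V))).Adj a b :=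
        (fromEdgeSet_adj _).mpr ⟨Finset.mem_coe.mpr heQ, hab⟩
      have hr' : (fromEdgeSet (↑Q : Set (Sym2 V)) \ fromEdgeSet {s(a, b)}).Reachable a b := by
        rw [← fromEdgeSet_erase]; exact hr
      obtain ⟨u, c, hc, _⟩ := adj_and_reachable_delete_edges_iff_exists_cycle.mp ⟨hadj, hr'⟩
      exact hacyc c hc
    set A := compE Q' a with hAdef
    set B := compE Q' b with hBdef
    have hAsub : A ⊆ Q' := compE_subset
    have hBsub : B ⊆ Q' := compE_subset
    -- every Q' edge is in A or B
    have hsplit : ∀ e' ∈ Q', e' ∈ A ∨ e' ∈ B := by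
      intro e' he'
      obtain ⟨c, d, rfl⟩ := sym2_exists_eq e'
      have hcd : c ≠ d := fun h => hdiag _ (hQ'sub he') (by simp [h])
      have hadj : (fromEdgeSet (↑Q' : Set (Sym2 V))).Adj c d :=
        (fromEdgeSet_adj _).mpr ⟨Finset.mem_coe.mpr he', hcd⟩
      have hcS : c ∈ supp Q := mem_supp.mpr ⟨s(c, d), hQ'sub he', by simp⟩
      have hca : (fromEdgeSet (↑Q : Set (Sym2 V))).Reachable c a :=
        (hconn c hcS).trans (hconn a haS).symm
      obtain ⟨wk⟩ := hca
      rcases reach_or_reach_erase (b := b) wk with h1 | h1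
      · left
        refine mem_compE.mpr ⟨he', fun v hv => ?_⟩
        rcases Sym2.mem_iff.mp hv with rfl | rfl
        · exact h1
        · exact hadj.symm.reachable.trans h1
      · right
        refine mem_compE.mpr ⟨he', fun v hv => ?_⟩
        rcases Sym2.mem_iff.mp hv with rfl | rfl
        · exact h1
        · exact hadj.symm.reachable.trans h1
    have hABdisj : Disjoint A B := by
      rw [Finset.disjoint_left]
      intro e' heA heB
      obtain ⟨c, d, rfl⟩ := sym2_exists_eq e'
      exact hnr (((mem_compE.mp heA).2 c (by simp)).symm.trans ((mem_compE.mp heB).2 c (by simp)))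
    have hABQ' : A ∪ B = Q' := by
      apply Finset.Subset.antisymm
      · exact Finset.union_subset hAsub hBsub
      · intro e' he'
        rcases hsplit e' he' with h | h
        · exact Finset.mem_union_left _ h
        · exact Finset.mem_union_right _ h
    -- recursive bounds
    have hArec : A.card + 1 ≤ (supp A ∪ {a}).card := by
      refine IH A (Finset.ssubset_of_subset_of_ssubset hAsub hQ'ss) a
        (fun e he => hdiag e (hQ'sub (hAsub he))) ?_ ?_
      · exact acyclic_anti (fromEdgeSet_mono (Finset.coe_subset.mpr (fun e he => hQ'sub (hAsub he)))) hacyc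
      · intro u hu
        obtain ⟨e', he', hue⟩ := mem_supp.mp hu
        exact reach_compE ((mem_compE.mp he').2 u hue)
    have hBrec : B.card + 1 ≤ (supp B ∪ {b}).card := by
      refine IH B (Finset.ssubset_of_subset_of_ssubset hBsub hQ'ss) b
        (fun e he => hdiag e (hQ'sub (hBsub he))) ?_ ?_
      · exact acyclic_anti (fromEdgeSet_mono (Finset.coe_subset.mpr (fun e he => hQ'sub (hBsub he)))) hacyc
      · intro u hu
        obtain ⟨e', he', hue⟩ := mem_supp.mp hu
        exact reach_compE ((mem_compE.mp he').2 u hue)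
    -- support sets are disjoint
    have hsAr : ∀ v ∈ supp A ∪ {a}, (fromEdgeSet (↑Q' : Set (Sym2 V))).Reachable v a := by
      intro v hv
      rcases Finset.mem_union.mp hv with hv | hv
      · obtain ⟨e', he', hue⟩ := mem_supp.mp hv
        exact (mem_compE.mp he').2 v hue
      · rw [Finset.mem_singleton] at hv
        exact hv ▸ Reachable.refl _
    have hsBr : ∀ v ∈ supp B ∪ {b}, (fromEdgeSet (↑Q' : Set (Sym2 V))).Reachable v b := by
      intro v hv
      rcases Finset.mem_union.mp hv with hv | hv
      · obtain ⟨e', he', hue⟩ := mem_supp.mp hv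
        exact (mem_compE.mp he').2 v hue
      · rw [Finset.mem_singleton] at hv
        exact hv ▸ Reachable.refl _
    have hsdisj : Disjoint (supp A ∪ {a}) (supp B ∪ {b}) := by
      rw [Finset.disjoint_left]
      intro v hvA hvB
      exact hnr ((hsAr v hvA).symm.trans (hsBr v hvB))
    have hssub : (supp A ∪ {a}) ∪ (supp B ∪ {b}) ⊆ supp Q := by
      intro v hv
      rcases Finset.mem_union.mp hv with hv | hv <;> rcases Finset.mem_union.mp hv with hv | hv
      · exact supp_subset (fun e he => hQ'sub (hAsub he)) hv
      · rwa [Finset.mem_singleton.mp hv]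
      · exact supp_subset (fun e he => hQ'sub (hBsub he)) hv
      · rwa [Finset.mem_singleton.mp hv]
    have hcards : A.card + B.card = Q'.card := by
      rw [← hABQ', Finset.card_union_of_disjoint hABdisj]
    have hcard : Q'.card = Q.card - 1 := Finset.card_erase_of_mem heQ
    have hQpos : 1 ≤ Q.card := Finset.card_pos.mpr ⟨_, heQ⟩
    have hsum : (supp A ∪ {a}).card + (supp B ∪ {b}).card = ((supp A ∪ {a}) ∪ (supp B ∪ {b})).card :=
      (Finset.card_union_of_disjoint hsdisj).symm
    have hle1 : ((supp A ∪ {a}) ∪ (supp B ∪ {b})).card ≤ (supp Q).card :=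
      Finset.card_le_card hssub
    have hle2 : (supp Q).card ≤ (supp Q ∪ {x}).card :=
      Finset.card_le_card Finset.subset_union_left
    omega

end PFAux

namespace PFAux

open scoped Classical

variable {V : Type*} [DecidableEq V] [Fintype V]

lemma compE_card_bound (Q : Finset (Sym2 V)) (x : V)
    (hdiag : ∀ e ∈ Q, ¬ e.IsDiag)
    (hacyc : (fromEdgeSet (↑(compE Q x) : Set (Sym2 V))).IsAcyclic) :
    (compE Q x).card + 1 ≤ (supp (compE Q x) ∪ {x}).card := by
  have h1 : ∀ u ∈ supp (compE Q x), (fromEdgeSet (↑(compE Q x) : Set (Sym2 V))).Reachable u x := by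
    intro u hu
    obtain ⟨e', he', hue⟩ := mem_supp.mp hu
    exact reach_compE ((mem_compE.mp he').2 u hue)
  have h2 : ∀ u ∈ supp (compE Q x), (fromEdgeSet (↑(compE (compE Q x) x) : Set (Sym2 V))).Reachable u x := by
    intro u hu
    exact reach_compE (h1 u hu)
  -- supp (compE Q x) might not equal; just apply acyclic_card directly with pivot x
  exact acyclic_card (compE Q x) x (fun e he => hdiag e (compE_subset he)) hacyc h1

/-- A pseudoforest has at most as many edges as supported vertices. -/
lemma pseudoforest_card : ∀ Q : Finset (Sym2 V),
    (∀ e ∈ Q, ¬ e.IsDiag) → GraphIsPseudoforest (fromEdgeSet (↑Q : Set (Sym2 V))) →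
    Q.card ≤ (supp Q).card := by
  intro Q
  induction Q using Finset.strongInduction with
  | _ Q IH =>
    intro hdiag hpf
    rcases Finset.eq_empty_or_nonempty Q with rfl | hQne
    · simp
    by_cases hacyc : (fromEdgeSet (↑Q : Set (Sym2 V))).IsAcyclic
    · -- acyclic case : split along an edge
      obtain ⟨e, heQ⟩ := hQne
      obtain ⟨a, b, rfl⟩ := sym2_exists_eq e
      have hab : a ≠ b := fun h => hdiag _ heQ (by simp [h])
      have haS : a ∈ supp Q := mem_supp.mpr ⟨s(a, b), heQ, by simp⟩
      have hbS : b ∈ supp Q := mem_supp.mpr ⟨s(a, b), heQ, by simp⟩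
      set Q' := Q.erase s(a, b) with hQ'def
      have hQ'ss : Q' ⊂ Q := Finset.erase_ssubset heQ
      have hQ'sub : Q' ⊆ Q := Finset.erase_subset _ _
      have hnr : ¬ (fromEdgeSet (↑Q' : Set (Sym2 V))).Reachable a b := by
        intro hr
        have hadj : (fromEdgeSet (↑Q : Set (Sym2 V))).Adj a b :=
          (fromEdgeSet_adj _).mpr ⟨Finset.mem_coe.mpr heQ, hab⟩
        have hr' : (fromEdgeSet (↑Q : Set (Sym2 V)) \ fromEdgeSet {s(a, b)}).Reachable a b := by
          rw [← fromEdgeSet_erase]; exact hr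
        obtain ⟨u, c, hc, _⟩ := adj_and_reachable_delete_edges_iff_exists_cycle.mp ⟨hadj, hr'⟩
        exact hacyc c hc
      set A := compE Q' a with hAdef
      set B := compE Q' b with hBdef
      set C := (Q' \ A) \ B with hCdef
      have hAsub : A ⊆ Q' := compE_subset
      have hBsub : B ⊆ Q' := compE_subset
      have hCsub : C ⊆ Q' := fun e he => (Finset.mem_sdiff.mp ((Finset.mem_sdiff.mp he).1)).1
      have hArec : A.card + 1 ≤ (supp A ∪ {a}).card := by
        refine compE_card_bound Q' a (fun e he => hdiag e (hQ'sub he)) ?_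
        exact acyclic_anti (fromEdgeSet_mono (Finset.coe_subset.mpr (fun e he => hQ'sub (hAsub he)))) hacyc
      have hBrec : B.card + 1 ≤ (supp B ∪ {b}).card := by
        refine compE_card_bound Q' b (fun e he => hdiag e (hQ'sub he)) ?_
        exact acyclic_anti (fromEdgeSet_mono (Finset.coe_subset.mpr (fun e he => hQ'sub (hBsub he)))) hacyc
      have hCrec : C.card ≤ (supp C).card := by
        refine IH C (Finset.ssubset_of_subset_of_ssubset hCsub hQ'ss)
          (fun e he => hdiag e (hQ'sub (hCsub he))) ?_
        exact acyclic_pseudoforest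
          (acyclic_anti (fromEdgeSet_mono (Finset.coe_subset.mpr (fun e he => hQ'sub (hCsub he)))) hacyc)
      have hsAr : ∀ v ∈ supp A ∪ {a}, (fromEdgeSet (↑Q' : Set (Sym2 V))).Reachable v a := by
        intro v hv
        rcases Finset.mem_union.mp hv with hv | hv
        · obtain ⟨e', he', hue⟩ := mem_supp.mp hv
          exact (mem_compE.mp he').2 v hue
        · rw [Finset.mem_singleton] at hv
          exact hv ▸ Reachable.refl _
      have hsBr : ∀ v ∈ supp B ∪ {b}, (fromEdgeSet (↑Q' : Set (Sym2 V))).Reachable v b := by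
        intro v hv
        rcases Finset.mem_union.mp hv with hv | hv
        · obtain ⟨e', he', hue⟩ := mem_supp.mp hv
          exact (mem_compE.mp he').2 v hue
        · rw [Finset.mem_singleton] at hv
          exact hv ▸ Reachable.refl _
      -- disjointness of the three support sets
      have hsAB : Disjoint (supp A ∪ {a}) (supp B ∪ {b}) := by
        rw [Finset.disjoint_left]
        intro v hvA hvB
        exact hnr ((hsAr v hvA).symm.trans (hsBr v hvB))
      have hreach_edge : ∀ (e' : Sym2 V), e' ∈ Q' → ∀ v ∈ e', ∀ w,
          (fromEdgeSet (↑Q' : Set (Sym2 V))).Reachable v w →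
          (∀ u ∈ e', (fromEdgeSet (↑Q' : Set (Sym2 V))).Reachable u w) := by
        intro e' he' v hv w hr u hu
        obtain ⟨c, d, rfl⟩ := sym2_exists_eq e'
        have hcd : c ≠ d := fun h => hdiag _ (hQ'sub he') (by simp [h])
        have hadj : (fromEdgeSet (↑Q' : Set (Sym2 V))).Adj c d :=
          (fromEdgeSet_adj _).mpr ⟨Finset.mem_coe.mpr he', hcd⟩
        rcases Sym2.mem_iff.mp hv with rfl | rfl <;> rcases Sym2.mem_iff.mp hu with rfl | rfl
        · exact hr
        · exact hadj.symm.reachable.trans hr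
        · exact hadj.reachable.trans hr
        · exact hr
      have hsAC : Disjoint (supp A ∪ {a}) (supp C) := by
        rw [Finset.disjoint_left]
        intro v hvA hvC
        obtain ⟨e', he', hue⟩ := mem_supp.mp hvC
        have : e' ∈ A := mem_compE.mpr ⟨hCsub he',
          hreach_edge e' (hCsub he') v hue a (hsAr v hvA)⟩
        exact (Finset.mem_sdiff.mp ((Finset.mem_sdiff.mp he').1)).2 this
      have hsBC : Disjoint (supp B ∪ {b}) (supp C) := by
        rw [Finset.disjoint_left]
        intro v hvB hvC
        obtain ⟨e', he', hue⟩ := mem_supp.mp hvC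
        have : e' ∈ B := mem_compE.mpr ⟨hCsub he',
          hreach_edge e' (hCsub he') v hue b (hsBr v hvB)⟩
        exact (Finset.mem_sdiff.mp he').2 this
      have hssub : ((supp A ∪ {a}) ∪ (supp B ∪ {b})) ∪ supp C ⊆ supp Q := by
        intro v hv
        rcases Finset.mem_union.mp hv with hv | hv
        · rcases Finset.mem_union.mp hv with hv | hv <;> rcases Finset.mem_union.mp hv with hv | hv
          · exact supp_subset (fun e he => hQ'sub (hAsub he)) hv
          · rwa [Finset.mem_singleton.mp hv]
          · exact supp_subset (fun e he => hQ'sub (hBsub he)) hv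
          · rwa [Finset.mem_singleton.mp hv]
        · exact supp_subset (fun e he => hQ'sub (hCsub he)) hv
      have hABdisj : Disjoint A B := by
        rw [Finset.disjoint_left]
        intro e' heA heB
        obtain ⟨c, d, rfl⟩ := sym2_exists_eq e'
        exact hnr (((mem_compE.mp heA).2 c (by simp)).symm.trans ((mem_compE.mp heB).2 c (by simp)))
      have hcards : A.card + B.card + C.card = Q'.card := by
        have h1 : (Q' \ A).card = Q'.card - A.card := Finset.card_sdiff_of_subset hAsub
        have h2 : C.card = (Q' \ A).card - B.card := by
          rw [hCdef]
          exact Finset.card_sdiff_of_subset (by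
            intro e he
            rw [Finset.mem_sdiff]
            refine ⟨hBsub he, fun heA => Finset.disjoint_left.mp hABdisj heA he⟩)
        have h3 := Finset.card_le_card hAsub
        have h4 : B.card ≤ (Q' \ A).card := Finset.card_le_card (by
          intro e he
          rw [Finset.mem_sdiff]
          exact ⟨hBsub he, fun heA => Finset.disjoint_left.mp hABdisj heA he⟩)
        omega
      have hcard : Q'.card = Q.card - 1 := Finset.card_erase_of_mem heQ
      have hQpos : 1 ≤ Q.card := Finset.card_pos.mpr ⟨_, heQ⟩
      have hsum1 : ((supp A ∪ {a}) ∪ (supp B ∪ {b})).card = (supp A ∪ {a}).card + (supp B ∪ {b}).card :=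
        Finset.card_union_of_disjoint hsAB
      have hsum2 : (((supp A ∪ {a}) ∪ (supp B ∪ {b})) ∪ supp C).card =
          ((supp A ∪ {a}) ∪ (supp B ∪ {b})).card + (supp C).card :=
        Finset.card_union_of_disjoint (Finset.disjoint_union_left.mpr ⟨hsAC, hsBC⟩)
      have hle1 := Finset.card_le_card hssub
      omega
    · -- there is a cycle
      simp only [IsAcyclic] at hacyc
      push_neg at hacyc
      obtain ⟨u, c, hc⟩ := hacyc
      have hlen : 0 < c.edges.length := by
        rw [Walk.length_edges]
        have := hc.three_le_length
        omega
      obtain ⟨e, he⟩ := List.exists_mem_of_length_pos hlen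
      obtain ⟨a, b, rfl⟩ := sym2_exists_eq e
      have heQ : s(a, b) ∈ Q := by
        have := c.edges_subset_edgeSet he
        rw [edgeSet_fromEdgeSet] at this
        exact Finset.mem_coe.mp this.1
      have hab : a ≠ b := by
        have := c.edges_subset_edgeSet he
        rw [edgeSet_fromEdgeSet] at this
        intro h
        exact this.2 (by simp [h])
      have haS : a ∈ supp Q := mem_supp.mpr ⟨s(a, b), heQ, by simp⟩
      set Q' := Q.erase s(a, b) with hQ'def
      have hQ'ss : Q' ⊂ Q := Finset.erase_ssubset heQ
      have hQ'sub : Q' ⊆ Q := Finset.erase_subset _ _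
      -- a and b are still reachable after deleting the cycle edge
      have hadj : (fromEdgeSet (↑Q : Set (Sym2 V))).Adj a b :=
        (fromEdgeSet_adj _).mpr ⟨Finset.mem_coe.mpr heQ, hab⟩
      have hr' : (fromEdgeSet (↑Q' : Set (Sym2 V))).Reachable a b := by
        have := (adj_and_reachable_delete_edges_iff_exists_cycle.mpr ⟨u, c, hc, he⟩).2
        rw [hQ'def, fromEdgeSet_erase]
        exact this
      set A := compE Q' a with hAdef
      set B := Q' \ A with hBdef
      have hAsub : A ⊆ Q' := compE_subset
      have hBsub : B ⊆ Q' := Finset.sdiff_subset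
      -- A is acyclic : a second distinct cycle would contradict pseudoforestness
      have hAacyc : (fromEdgeSet (↑A : Set (Sym2 V))).IsAcyclic := by
        intro w d hd
        have hsub : fromEdgeSet (↑A : Set (Sym2 V)) ≤ fromEdgeSet (↑Q : Set (Sym2 V)) :=
          fromEdgeSet_mono (Finset.coe_subset.mpr (fun e he => hQ'sub (hAsub he)))
        have hd' := (Walk.mapLe_isCycle hsub).mpr hd
        -- base vertex of d reaches a in Q'
        have hwa : (fromEdgeSet (↑Q' : Set (Sym2 V))).Reachable w a := by
          cases d with
          | nil => exact absurd rfl hd.ne_nil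
          | cons h p =>
            have h1 := (fromEdgeSet_adj _).mp h
            have h2 := (mem_compE.mp (Finset.mem_coe.mp h1.1)).2 w (by simp)
            exact h2
        have hru : (fromEdgeSet (↑Q : Set (Sym2 V))).Reachable u w := by
          have ha_supp : a ∈ c.support := c.fst_mem_support_of_mem_edges he
          have h1 : (fromEdgeSet (↑Q : Set (Sym2 V))).Reachable u a := ⟨c.takeUntil a ha_supp⟩
          exact h1.trans ((hwa.mono (fromEdgeSet_mono (Finset.coe_subset.mpr hQ'sub))).symm)
        have hiff := hpf c (d.mapLe hsub) hc hd' hru s(a, b)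
        have : s(a, b) ∈ (d.mapLe hsub).edges := hiff.mp he
        rw [edges_mapLe] at this
        have h5 := d.edges_subset_edgeSet this
        rw [edgeSet_fromEdgeSet] at h5
        have h6 : s(a, b) ∈ A := Finset.mem_coe.mp h5.1
        exact Finset.notMem_erase _ _ (hAsub h6)
      have hArec : A.card + 1 ≤ (supp A ∪ {a}).card :=
        compE_card_bound Q' a (fun e he => hdiag e (hQ'sub he)) hAacyc
      have hBrec : B.card ≤ (supp B).card := by
        refine IH B (Finset.ssubset_of_subset_of_ssubset hBsub hQ'ss)
          (fun e he => hdiag e (hQ'sub (hBsub he))) ?_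
        exact pseudoforest_anti
          (fromEdgeSet_mono (Finset.coe_subset.mpr (fun e he => hQ'sub (hBsub he)))) hpf
      have hsAr : ∀ v ∈ supp A ∪ {a}, (fromEdgeSet (↑Q' : Set (Sym2 V))).Reachable v a := by
        intro v hv
        rcases Finset.mem_union.mp hv with hv | hv
        · obtain ⟨e', he', hue⟩ := mem_supp.mp hv
          exact (mem_compE.mp he').2 v hue
        · rw [Finset.mem_singleton] at hv
          exact hv ▸ Reachable.refl _
      have hsAB : Disjoint (supp A ∪ {a}) (supp B) := by
        rw [Finset.disjoint_left]
        intro v hvA hvB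
        obtain ⟨e', he', hue⟩ := mem_supp.mp hvB
        obtain ⟨cc, dd, rfl⟩ := sym2_exists_eq e'
        have hcd : cc ≠ dd := fun h => hdiag _ (hQ'sub (hBsub he')) (by simp [h])
        have hadj' : (fromEdgeSet (↑Q' : Set (Sym2 V))).Adj cc dd :=
          (fromEdgeSet_adj _).mpr ⟨Finset.mem_coe.mpr (hBsub he'), hcd⟩
        have hall : ∀ w ∈ s(cc, dd), (fromEdgeSet (↑Q' : Set (Sym2 V))).Reachable w a := by
          intro w hw
          have hv2 := hsAr v hvA
          rcases Sym2.mem_iff.mp hue with rfl | rfl <;> rcases Sym2.mem_iff.mp hw with rfl | rfl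
          · exact hv2
          · exact hadj'.symm.reachable.trans hv2
          · exact hadj'.reachable.trans hv2
          · exact hv2
        have : s(cc, dd) ∈ A := mem_compE.mpr ⟨hBsub he', hall⟩
        exact (Finset.mem_sdiff.mp he').2 this
      have hssub : (supp A ∪ {a}) ∪ supp B ⊆ supp Q := by
        intro v hv
        rcases Finset.mem_union.mp hv with hv | hv
        · rcases Finset.mem_union.mp hv with hv | hv
          · exact supp_subset (fun e he => hQ'sub (hAsub he)) hv
          · rwa [Finset.mem_singleton.mp hv]
        · exact supp_subset (fun e he => hQ'sub (hBsub he)) hv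
      have hcards : A.card + B.card = Q'.card := by
        have h1 : B.card = Q'.card - A.card := Finset.card_sdiff_of_subset hAsub
        have h2 := Finset.card_le_card hAsub
        omega
      have hcard : Q'.card = Q.card - 1 := Finset.card_erase_of_mem heQ
      have hQpos : 1 ≤ Q.card := Finset.card_pos.mpr ⟨_, heQ⟩
      have hsum1 : ((supp A ∪ {a}) ∪ supp B).card = (supp A ∪ {a}).card + (supp B).card :=
        Finset.card_union_of_disjoint hsAB
      have hle1 := Finset.card_le_card hssub
      omega

end PFAux

namespace PFAux

open scoped Classical

variable {V : Type*} [DecidableEq V] [Fintype V]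

def NWValid (E : Finset (Sym2 V)) (n : ℕ) (F : Fin n → Finset (Sym2 V)) : Prop :=
  (∀ i, F i ⊆ E) ∧ (∀ i, (fromEdgeSet (↑(F i) : Set (Sym2 V))).IsAcyclic) ∧
    ∀ i j, i ≠ j → Disjoint (F i) (F j)

def NWtot {n : ℕ} (F : Fin n → Finset (Sym2 V)) : ℕ := ∑ i, (F i).card

def NWStep {n : ℕ} (S S' : (Fin n → Finset (Sym2 V)) × Sym2 V) : Prop :=
  ∃ (i : Fin n) (x y : V) (w : (fromEdgeSet (↑(S.1 i) : Set (Sym2 V))).Walk x y),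
    S.2 = s(x, y) ∧ w.IsPath ∧ S'.2 ∈ w.edges ∧
    S'.1 = Function.update S.1 i (insert S.2 ((S.1 i).erase S'.2))

def NWInv (E : Finset (Sym2 V)) (n m : ℕ) (S : (Fin n → Finset (Sym2 V)) × Sym2 V) : Prop :=
  NWValid E n S.1 ∧ NWtot S.1 = m ∧ S.2 ∈ E ∧ ∀ i, S.2 ∉ S.1 i

lemma exists_max_valid (E : Finset (Sym2 V)) (n : ℕ) :
    ∃ F, NWValid E n F ∧ ∀ F', NWValid E n F' → NWtot F' ≤ NWtot F := by
  have hne : Nonempty {F : Fin n → Finset (Sym2 V) // NWValid E n F} := by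
    refine ⟨⟨fun _ => ∅, ?_, ?_, ?_⟩⟩
    · intro i; simp
    · intro i
      rw [show ((↑(∅ : Finset (Sym2 V)) : Set (Sym2 V))) = (∅ : Set (Sym2 V)) by simp,
        fromEdgeSet_empty]
      exact isAcyclic_bot
    · intro i j _; simp
  obtain ⟨⟨F, hF⟩, hmax⟩ := Finite.exists_max
    (fun p : {F : Fin n → Finset (Sym2 V) // NWValid E n F} => NWtot p.1)
  exact ⟨F, hF, fun F' h => hmax ⟨F', h⟩⟩

lemma step_preserves {E : Finset (Sym2 V)} {n m : ℕ} (hdiag : ∀ e ∈ E, ¬ e.IsDiag)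
    {S S' : (Fin n → Finset (Sym2 V)) × Sym2 V} (hS : NWInv E n m S) (h : NWStep S S') :
    NWInv E n m S' := by
  obtain ⟨i, x, y, w, hxy, hw, he', hF'⟩ := h
  obtain ⟨⟨hsub, hacyc, hdisj⟩, htot, heE, hnot⟩ := hS
  have hxyne : x ≠ y := by
    intro h
    apply hdiag _ heE
    rw [hxy, h]
    simp
  have he'Fi : S'.2 ∈ S.1 i := by
    have h2 := w.edges_subset_edgeSet he'
    rw [edgeSet_fromEdgeSet] at h2
    exact Finset.mem_coe.mp h2.1
  have he'E : S'.2 ∈ E := hsub i he'Fi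
  have hee' : S.2 ≠ S'.2 := fun h => hnot i (h ▸ he'Fi)
  -- acyclicity of the new forest at i
  have heraseacyc : (fromEdgeSet (↑((S.1 i).erase S'.2) : Set (Sym2 V))).IsAcyclic :=
    acyclic_anti (fromEdgeSet_mono (Finset.coe_subset.mpr (Finset.erase_subset _ _))) (hacyc i)
  have hnr : ¬ (fromEdgeSet (↑((S.1 i).erase S'.2) : Set (Sym2 V))).Reachable x y := by
    rintro ⟨w2⟩
    have hle : fromEdgeSet (↑((S.1 i).erase S'.2) : Set (Sym2 V)) ≤
        fromEdgeSet (↑(S.1 i) : Set (Sym2 V)) :=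
      fromEdgeSet_mono (Finset.coe_subset.mpr (Finset.erase_subset _ _))
    have hp2 : ((w2.toPath : (fromEdgeSet (↑((S.1 i).erase S'.2) : Set (Sym2 V))).Walk x y).mapLe hle).IsPath :=
      (Walk.mapLe_isPath hle).mpr (Walk.toPath _).2
    have hequ := (hacyc i).path_unique ⟨w, hw⟩ ⟨_, hp2⟩
    have hedges : w.edges = ((w2.toPath : (fromEdgeSet (↑((S.1 i).erase S'.2) : Set (Sym2 V))).Walk x y).mapLe hle).edges := by
      rw [Subtype.ext_iff] at hequ
      exact congrArg Walk.edges hequ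
    rw [hedges, edges_mapLe] at he'
    have h3 := Walk.edges_subset_edgeSet _ he'
    rw [edgeSet_fromEdgeSet] at h3
    have := Finset.mem_coe.mp h3.1
    exact Finset.notMem_erase _ _ this
  have hXacyc : (fromEdgeSet (↑(insert S.2 ((S.1 i).erase S'.2)) : Set (Sym2 V))).IsAcyclic := by
    have hcoe : (↑(insert S.2 ((S.1 i).erase S'.2)) : Set (Sym2 V)) =
        (↑((S.1 i).erase S'.2) : Set (Sym2 V)) ∪ {S.2} := by
      rw [Finset.coe_insert, Set.insert_eq, Set.union_comm]
    rw [hcoe, fromEdgeSet_union, hxy]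
    exact isAcyclic_sup_edge hxyne heraseacyc hnr
  have hcardX : (insert S.2 ((S.1 i).erase S'.2)).card = (S.1 i).card := by
    rw [Finset.card_insert_of_notMem (fun h => hnot i (Finset.mem_of_mem_erase h)),
      Finset.card_erase_of_mem he'Fi]
    have : 1 ≤ (S.1 i).card := Finset.card_pos.mpr ⟨_, he'Fi⟩
    omega
  refine ⟨⟨?_, ?_, ?_⟩, ?_, he'E, ?_⟩
  · intro j
    rw [hF']
    by_cases hj : j = i
    · subst hj
      rw [Function.update_self]
      intro d hd
      rcases Finset.mem_insert.mp hd with rfl | hd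
      · exact heE
      · exact hsub j (Finset.mem_of_mem_erase hd)
    · rw [Function.update_of_ne hj]; exact hsub j
  · intro j
    rw [hF']
    by_cases hj : j = i
    · subst hj; rw [Function.update_self]; exact hXacyc
    · rw [Function.update_of_ne hj]; exact hacyc j
  · intro j k hjk
    rw [hF']
    have hXsub : ∀ d ∈ insert S.2 ((S.1 i).erase S'.2), d = S.2 ∨ d ∈ S.1 i := by
      intro d hd
      rcases Finset.mem_insert.mp hd with rfl | hd
      · exact Or.inl rfl
      · exact Or.inr (Finset.mem_of_mem_erase hd)
    by_cases hj : j = i <;> by_cases hk : k = i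
    · exact absurd (hj.trans hk.symm) hjk
    · subst hj
      rw [Function.update_self, Function.update_of_ne hk]
      rw [Finset.disjoint_left]
      intro d hd hdk
      rcases hXsub d hd with rfl | hd'
      · exact hnot k hdk
      · exact Finset.disjoint_left.mp (hdisj j k hjk) hd' hdk
    · subst hk
      rw [Function.update_self, Function.update_of_ne hj]
      rw [Finset.disjoint_right]
      intro d hd hdj
      rcases hXsub d hd with rfl | hd'
      · exact hnot j hdj
      · exact Finset.disjoint_left.mp (hdisj k j (Ne.symm hjk)) hd' hdj
    · rw [Function.update_of_ne hj, Function.update_of_ne hk]; exact hdisj j k hjk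
  · rw [hF', ← htot]
    unfold NWtot
    refine Finset.sum_congr rfl (fun j _ => ?_)
    by_cases hj : j = i
    · subst hj; rw [Function.update_self, hcardX]
    · rw [Function.update_of_ne hj]
  · intro j
    rw [hF']
    by_cases hj : j = i
    · subst hj
      rw [Function.update_self]
      intro hc
      rcases Finset.mem_insert.mp hc with h | h
      · exact hee' h.symm
      · exact Finset.notMem_erase _ _ h
    · rw [Function.update_of_ne hj]
      intro hc
      exact Finset.disjoint_left.mp (hdisj j i hj) hc he'Fi

lemma inv_reach_endpoints {E : Finset (Sym2 V)} {n m : ℕ} (hdiag : ∀ e ∈ E, ¬ e.IsDiag)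
    (hmax : ∀ F', NWValid E n F' → NWtot F' ≤ m)
    {S : (Fin n → Finset (Sym2 V)) × Sym2 V} (hS : NWInv E n m S) (i : Fin n) {x y : V}
    (hxy : S.2 = s(x, y)) :
    (fromEdgeSet (↑(S.1 i) : Set (Sym2 V))).Reachable x y := by
  by_contra hnr
  obtain ⟨⟨hsub, hacyc, hdisj⟩, htot, heE, hnot⟩ := hS
  have hxyne : x ≠ y := by
    intro h
    apply hdiag _ heE
    rw [hxy, h]
    simp
  have hXacyc : (fromEdgeSet (↑(insert S.2 (S.1 i)) : Set (Sym2 V))).IsAcyclic := by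
    have hcoe : (↑(insert S.2 (S.1 i)) : Set (Sym2 V)) =
        (↑(S.1 i) : Set (Sym2 V)) ∪ {S.2} := by
      rw [Finset.coe_insert, Set.insert_eq, Set.union_comm]
    rw [hcoe, fromEdgeSet_union, hxy]
    exact isAcyclic_sup_edge hxyne (hacyc i) hnr
  have hvalid : NWValid E n (Function.update S.1 i (insert S.2 (S.1 i))) := by
    refine ⟨?_, ?_, ?_⟩
    · intro j
      by_cases hj : j = i
      · subst hj
        rw [Function.update_self]
        intro d hd
        rcases Finset.mem_insert.mp hd with rfl | hd
        · exact heE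
        · exact hsub j hd
      · rw [Function.update_of_ne hj]; exact hsub j
    · intro j
      by_cases hj : j = i
      · subst hj; rw [Function.update_self]; exact hXacyc
      · rw [Function.update_of_ne hj]; exact hacyc j
    · intro j k hjk
      by_cases hj : j = i <;> by_cases hk : k = i
      · exact absurd (hj.trans hk.symm) hjk
      · subst hj
        rw [Function.update_self, Function.update_of_ne hk]
        rw [Finset.disjoint_left]
        intro d hd hdk
        rcases Finset.mem_insert.mp hd with rfl | hd'
        · exact hnot k hdk
        · exact Finset.disjoint_left.mp (hdisj j k hjk) hd' hdk
      · subst hk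
        rw [Function.update_self, Function.update_of_ne hj]
        rw [Finset.disjoint_right]
        intro d hd hdj
        rcases Finset.mem_insert.mp hd with rfl | hd'
        · exact hnot j hdj
        · exact Finset.disjoint_left.mp (hdisj k j (Ne.symm hjk)) hd' hdj
      · rw [Function.update_of_ne hj, Function.update_of_ne hk]; exact hdisj j k hjk
  have hbig := hmax _ hvalid
  have hsum : NWtot (Function.update S.1 i (insert S.2 (S.1 i))) =
      (insert S.2 (S.1 i)).card + ∑ j ∈ Finset.univ.erase i, (S.1 j).card := by
    unfold NWtot
    rw [← Finset.add_sum_erase Finset.univ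
      (fun j => (Function.update S.1 i (insert S.2 (S.1 i)) j).card) (Finset.mem_univ i)]
    rw [Function.update_self]
    congr 1
    refine Finset.sum_congr rfl (fun j hj => ?_)
    rw [Function.update_of_ne (Finset.ne_of_mem_erase hj)]
  have hsum2 : (S.1 i).card + ∑ j ∈ Finset.univ.erase i, (S.1 j).card = NWtot S.1 := by
    unfold NWtot
    rw [Finset.add_sum_erase Finset.univ (fun j => (S.1 j).card) (Finset.mem_univ i)]
  have hcX : (insert S.2 (S.1 i)).card = (S.1 i).card + 1 :=
    Finset.card_insert_of_notMem (hnot i)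
  omega

end PFAux

namespace PFAux

open scoped Classical

variable {V : Type*} [DecidableEq V] [Fintype V]

/-- Exchanging an edge `e'` of the unique `x`-`y` path for the new edge `s(x,y)` does not
change the reachability relation. -/
lemma reach_insert_erase {s : Finset (Sym2 V)} {x y : V} {e' : Sym2 V} (hxy : x ≠ y)
    (hes : s(x, y) ∉ s) (w : (fromEdgeSet (↑s : Set (Sym2 V))).Walk x y) (hw : w.IsPath)
    (he' : e' ∈ w.edges) (u v : V) :
    (fromEdgeSet (↑(insert s(x, y) (s.erase e')) : Set (Sym2 V))).Reachable u v ↔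
      (fromEdgeSet (↑s : Set (Sym2 V))).Reachable u v := by
  have he's : e' ∈ s := by
    have h2 := w.edges_subset_edgeSet he'
    rw [edgeSet_fromEdgeSet] at h2
    exact Finset.mem_coe.mp h2.1
  have he'ne : e' ≠ s(x, y) := fun h => hes (h ▸ he's)
  have hwsub : ∀ d ∈ w.edges, d ∈ s := by
    intro d hd
    have h2 := w.edges_subset_edgeSet hd
    rw [edgeSet_fromEdgeSet] at h2
    exact Finset.mem_coe.mp h2.1
  -- g1 = g0 plus the new edge
  have hg1 : (↑(insert s(x, y) s) : Set (Sym2 V)) = (↑s : Set (Sym2 V)) ∪ {s(x, y)} := by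
    rw [Finset.coe_insert, Set.insert_eq, Set.union_comm]
  have h01 : ∀ p q : V, (fromEdgeSet (↑(insert s(x, y) s) : Set (Sym2 V))).Reachable p q ↔
      (fromEdgeSet (↑s : Set (Sym2 V))).Reachable p q := by
    intro p q
    rw [hg1, fromEdgeSet_union]
    exact reachable_sup_edge ⟨w⟩
  -- build a cycle through e' in g1
  have hle : fromEdgeSet (↑s : Set (Sym2 V)) ≤ fromEdgeSet (↑(insert s(x, y) s) : Set (Sym2 V)) :=
    fromEdgeSet_mono (by rw [Finset.coe_subset]; exact Finset.subset_insert _ _)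
  have hadjxy : (fromEdgeSet (↑(insert s(x, y) s) : Set (Sym2 V))).Adj x y :=
    (fromEdgeSet_adj _).mpr ⟨Finset.mem_coe.mpr (Finset.mem_insert_self _ _), hxy⟩
  set w1 := w.mapLe hle with hw1def
  have hw1 : w1.IsPath := (Walk.mapLe_isPath hle).mpr hw
  have hw1e : w1.edges = w.edges := edges_mapLe hle w
  have hcyc : (Walk.cons hadjxy.symm w1).IsCycle := by
    rw [Walk.cons_isCycle_iff]
    refine ⟨hw1, fun hmem => ?_⟩
    rw [hw1e] at hmem
    rw [Sym2.eq_swap] at hmem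
    exact hes (hwsub _ hmem)
  have he'c : e' ∈ (Walk.cons hadjxy.symm w1).edges := by
    rw [Walk.edges_cons, hw1e]
    exact List.mem_cons_of_mem _ he'
  -- reachability of the endpoints of e' after deleting e'
  obtain ⟨p, q, rfl⟩ := sym2_exists_eq e'
  have hkey := (adj_and_reachable_delete_edges_iff_exists_cycle
      (G := fromEdgeSet (↑(insert s(x, y) s) : Set (Sym2 V))) (v := p) (w := q)).mpr
    ⟨y, Walk.cons hadjxy.symm w1, hcyc, he'c⟩
  have hpq : p ≠ q := by
    intro h
    have := hkey.1.ne
    exact this (by rw [h])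
  have herase : fromEdgeSet (↑(insert s(x, y) s) : Set (Sym2 V)) \ fromEdgeSet {s(p, q)} =
      fromEdgeSet (↑(insert s(x, y) (s.erase s(p, q))) : Set (Sym2 V)) := by
    rw [← fromEdgeSet_sdiff]
    congr 1
    rw [Finset.coe_insert, Finset.coe_insert, Finset.coe_erase]
    ext d
    simp only [Set.mem_diff, Set.mem_insert_iff, Set.mem_singleton_iff, Finset.mem_coe]
    constructor
    · rintro ⟨rfl | hd, hne⟩
      · exact Or.inl rfl
      · exact Or.inr ⟨hd, hne⟩
    · rintro (rfl | ⟨hd, hne⟩)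
      · exact ⟨Or.inl rfl, fun h => he'ne h.symm⟩
      · exact ⟨Or.inr hd, hne⟩
  have hr2 : (fromEdgeSet (↑(insert s(x, y) (s.erase s(p, q))) : Set (Sym2 V))).Reachable p q := by
    rw [← herase]
    exact hkey.2
  have hg2 : (↑(insert s(x, y) s) : Set (Sym2 V)) =
      (↑(insert s(x, y) (s.erase s(p, q))) : Set (Sym2 V)) ∪ {s(p, q)} := by
    rw [Finset.coe_insert, Finset.coe_insert, Finset.coe_erase]
    ext d
    simp only [Set.mem_union, Set.mem_insert_iff, Set.mem_singleton_iff, Set.mem_diff,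
      Finset.mem_coe]
    constructor
    · rintro (rfl | hd)
      · exact Or.inl (Or.inl rfl)
      · by_cases hdq : d = s(p, q)
        · exact Or.inr hdq
        · exact Or.inl (Or.inr ⟨hd, hdq⟩)
    · rintro ((rfl | ⟨hd, _⟩) | rfl)
      · exact Or.inl rfl
      · exact Or.inr hd
      · exact Or.inr he's
  have h21 : ∀ a b : V, (fromEdgeSet (↑(insert s(x, y) s) : Set (Sym2 V))).Reachable a b ↔
      (fromEdgeSet (↑(insert s(x, y) (s.erase s(p, q))) : Set (Sym2 V))).Reachable a b := by
    intro a b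
    rw [hg2, fromEdgeSet_union]
    exact reachable_sup_edge hr2
  rw [← h21 u v, h01 u v]

end PFAux

namespace PFAux

open scoped Classical

variable {V : Type*} [DecidableEq V] [Fintype V]

lemma nash_williams (E : Finset (Sym2 V)) (n : ℕ) (hn : 0 < n)
    (hdiag : ∀ e ∈ E, ¬ e.IsDiag)
    (hden : ∀ U : Finset V, U.Nonempty →
      (E.filter (fun e => ∀ v ∈ e, v ∈ U)).card ≤ n * (U.card - 1)) :
    ∃ F : Fin n → Finset (Sym2 V),
      (∀ i, (fromEdgeSet (↑(F i) : Set (Sym2 V))).IsAcyclic) ∧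
      (∀ i j, i ≠ j → Disjoint (F i) (F j)) ∧ (∀ i, F i ⊆ E) ∧ ∀ e ∈ E, ∃ i, e ∈ F i := by
  obtain ⟨F0, hF0v, hF0max⟩ := exists_max_valid E n
  refine ⟨F0, hF0v.2.1, hF0v.2.2, hF0v.1, ?_⟩
  by_contra hcov
  push_neg at hcov
  obtain ⟨e0, he0E, he0⟩ := hcov
  obtain ⟨x0, y0, he0xy⟩ := sym2_exists_eq e0
  set m := NWtot F0 with hm
  have hmax : ∀ F', NWValid E n F' → NWtot F' ≤ m := hF0max
  set Reach : ((Fin n → Finset (Sym2 V)) × Sym2 V) → Prop :=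
    fun S => Relation.ReflTransGen NWStep (F0, e0) S with hReach
  have hinv : ∀ S, Reach S → NWInv E n m S := by
    intro S h
    rw [hReach] at h
    induction h with
    | refl => exact ⟨hF0v, rfl, he0E, he0⟩
    | tail hab hbc ih => exact step_preserves hdiag ih hbc
  set D : Set (Sym2 V) := {d | ∃ F, Reach (F, d)} with hD
  have he0D : e0 ∈ D := ⟨F0, Relation.ReflTransGen.refl⟩
  set GD := fromEdgeSet D with hGD
  set U : Finset V := Finset.univ.filter (fun v => GD.Reachable x0 v) with hU
  have hstepD : ∀ F e, Reach (F, e) → ∀ (i : Fin n) (x y : V)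
      (w : (fromEdgeSet (↑(F i) : Set (Sym2 V))).Walk x y), e = s(x, y) → w.IsPath →
      ∀ e' ∈ w.edges, Reach (Function.update F i (insert e ((F i).erase e')), e') := by
    intro F e hre i x y w hxy hw e' he'
    exact Relation.ReflTransGen.tail hre ⟨i, x, y, w, hxy, hw, he', rfl⟩
  have hedgesD : ∀ F e, Reach (F, e) → ∀ (i : Fin n) (x y : V)
      (w : (fromEdgeSet (↑(F i) : Set (Sym2 V))).Walk x y), e = s(x, y) → w.IsPath →
      ∀ e' ∈ w.edges, e' ∈ D := by
    intro F e hre i x y w hxy hw e' he'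
    exact ⟨_, hstepD F e hre i x y w hxy hw e' he'⟩
  have htransD : ∀ (G' : SimpleGraph V) (x y : V) (w : G'.Walk x y),
      (∀ e' ∈ w.edges, e' ∈ D) → ∃ w2 : GD.Walk x y, w2.edges = w.edges := by
    intro G' x y w h
    have hsubT : ∀ e' ∈ w.edges, e' ∈ GD.edgeSet := by
      intro e' he'
      rw [hGD, edgeSet_fromEdgeSet]
      exact ⟨h e' he', G'.not_isDiag_of_mem_edgeSet (w.edges_subset_edgeSet he')⟩
    exact ⟨w.transfer GD hsubT, w.edges_transfer hsubT⟩
  -- CL2 : endpoints of free edges of reachable states lie in U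
  have hCL2 : ∀ S, Reach S → ∀ v ∈ S.2, GD.Reachable x0 v := by
    intro S h
    rw [hReach] at h
    induction h with
    | refl =>
      intro v hv
      have hfund := inv_reach_endpoints hdiag hmax
        (hinv _ (Relation.ReflTransGen.refl)) (⟨0, hn⟩ : Fin n) he0xy
      obtain ⟨w0⟩ := hfund
      have hpD : ∀ e' ∈ (w0.toPath : (fromEdgeSet (↑(F0 ⟨0, hn⟩) : Set (Sym2 V))).Walk x0 y0).edges,
          e' ∈ D :=
        fun e' he' => hedgesD F0 e0 Relation.ReflTransGen.refl ⟨0, hn⟩ x0 y0 _ he0xy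
          (w0.toPath).2 e' he'
      obtain ⟨w2, _⟩ := htransD _ x0 y0 _ hpD
      rw [he0xy] at hv
      rcases Sym2.mem_iff.mp hv with rfl | rfl
      · exact Reachable.refl _
      · exact ⟨w2⟩
    | @tail b c hab hbc ih =>
      obtain ⟨i, x, y, w, hxy, hw, he', hF'⟩ := hbc
      intro v hv
      have hwD : ∀ e'' ∈ w.edges, e'' ∈ D := hedgesD b.1 b.2 hab i x y w hxy hw
      obtain ⟨w2, hw2e⟩ := htransD _ x y w hwD
      have he'2 : c.2 ∈ w2.edges := by rw [hw2e]; exact he'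
      have hx0x : GD.Reachable x0 x := ih x (by rw [hxy]; simp)
      obtain ⟨p, q, hpq⟩ := sym2_exists_eq c.2
      have hpsup : p ∈ w2.support := w2.fst_mem_support_of_mem_edges (hpq ▸ he'2)
      have hqsup : q ∈ w2.support := w2.snd_mem_support_of_mem_edges (hpq ▸ he'2)
      rw [hpq] at hv
      rcases Sym2.mem_iff.mp hv with rfl | rfl
      · exact hx0x.trans ⟨w2.takeUntil v hpsup⟩
      · exact hx0x.trans ⟨w2.takeUntil v hqsup⟩
  have hDU : ∀ d ∈ D, ∀ v ∈ d, v ∈ U := by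
    rintro d ⟨F, hF⟩ v hv
    rw [hU, Finset.mem_filter]
    exact ⟨Finset.mem_univ v, hCL2 (F, d) hF v hv⟩
  set sU : Finset (Sym2 V) → Finset (Sym2 V) :=
    fun t => t.filter (fun d => ∀ v ∈ d, v ∈ U) with hsU
  have hfundsU : ∀ F e, Reach (F, e) → ∀ (i : Fin n) (x y : V)
      (w : (fromEdgeSet (↑(F i) : Set (Sym2 V))).Walk x y), e = s(x, y) → w.IsPath →
      ∀ e' ∈ w.edges, e' ∈ sU (F i) := by
    intro F e hre i x y w hxy hw e' he'
    rw [hsU]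
    rw [Finset.mem_filter]
    constructor
    · have h2 := w.edges_subset_edgeSet he'
      rw [edgeSet_fromEdgeSet] at h2
      exact Finset.mem_coe.mp h2.1
    · exact hDU _ (hedgesD F e hre i x y w hxy hw e' he')
  -- CL3 : invariance of the in-U reachability relation
  have hCL3 : ∀ S, Reach S → ∀ (i : Fin n) (u v : V),
      (fromEdgeSet (↑(sU (S.1 i)) : Set (Sym2 V))).Reachable u v ↔
        (fromEdgeSet (↑(sU (F0 i)) : Set (Sym2 V))).Reachable u v := by
    intro S h
    rw [hReach] at h
    induction h with
    | refl => exact fun i u v => Iff.rfl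
    | @tail b c hab hbc ih =>
      obtain ⟨i, x, y, w, hxy, hw, he', hF'⟩ := hbc
      intro j u v
      rw [hF']
      by_cases hj : j = i
      · subst hj
        rw [Function.update_self]
        have hinvb := hinv _ hab
        have hwsU : ∀ e'' ∈ w.edges, e'' ∈ sU (b.1 j) := hfundsU b.1 b.2 hab j x y w hxy hw
        have hxyne : x ≠ y := by
          intro hh
          apply hdiag _ hinvb.2.2.1
          rw [hxy, hh]
          simp
        have hbe : b.2 ∉ sU (b.1 j) := fun hc => hinvb.2.2.2 j (Finset.filter_subset _ _ hc)
        have hsubT : ∀ e'' ∈ w.edges, e'' ∈ (fromEdgeSet (↑(sU (b.1 j)) : Set (Sym2 V))).edgeSet := by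
          intro e'' he''
          rw [edgeSet_fromEdgeSet]
          exact ⟨Finset.mem_coe.mpr (hwsU e'' he''),
            SimpleGraph.not_isDiag_of_mem_edgeSet _ (w.edges_subset_edgeSet he'')⟩
        have hw2p : (w.transfer _ hsubT).IsPath := hw.transfer hsubT
        have hw2e : (w.transfer _ hsubT).edges = w.edges := w.edges_transfer hsubT
        have hbU : ∀ v' ∈ b.2, v' ∈ U := hDU b.2 ⟨b.1, hab⟩
        have hset : sU (insert b.2 ((b.1 j).erase c.2)) =
            insert b.2 ((sU (b.1 j)).erase c.2) := by
          rw [hsU]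
          ext d
          simp only [Finset.mem_filter, Finset.mem_insert, Finset.mem_erase]
          constructor
          · rintro ⟨rfl | ⟨hdc, hdb⟩, hall⟩
            · exact Or.inl rfl
            · exact Or.inr ⟨hdc, hdb, hall⟩
          · rintro (rfl | ⟨hdc, hdb, hall⟩)
            · exact ⟨Or.inl rfl, hbU⟩
            · exact ⟨Or.inr ⟨hdc, hdb⟩, hall⟩
        rw [hset]
        have he'w2 : c.2 ∈ (w.transfer _ hsubT).edges := by rw [hw2e]; exact he'
        have hes : s(x, y) ∉ sU (b.1 j) := by rw [← hxy]; exact hbe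
        have hres := reach_insert_erase hxyne hes (w.transfer _ hsubT) hw2p he'w2 u v
        rw [hxy]
        exact hres.trans (ih j u v)
      · rw [Function.update_of_ne hj]
        exact ih j u v
  -- CL4 : D-edges connect within each filtered initial forest
  have hCL4 : ∀ d ∈ D, ∀ (i : Fin n) (p q : V), d = s(p, q) →
      (fromEdgeSet (↑(sU (F0 i)) : Set (Sym2 V))).Reachable p q := by
    rintro d ⟨F, hF⟩ i p q rfl
    have hr := inv_reach_endpoints hdiag hmax (hinv _ hF) i rfl
    obtain ⟨w0⟩ := hr
    have hsubt : ∀ e'' ∈ (w0.toPath : (fromEdgeSet (↑(F i) : Set (Sym2 V))).Walk p q).edges,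
        e'' ∈ sU (F i) :=
      hfundsU F _ hF i p q _ rfl (w0.toPath).2
    have hsubT : ∀ e'' ∈ (w0.toPath : (fromEdgeSet (↑(F i) : Set (Sym2 V))).Walk p q).edges,
        e'' ∈ (fromEdgeSet (↑(sU (F i)) : Set (Sym2 V))).edgeSet := by
      intro e'' he''
      rw [edgeSet_fromEdgeSet]
      exact ⟨Finset.mem_coe.mpr (hsubt e'' he''),
        SimpleGraph.not_isDiag_of_mem_edgeSet _ (Walk.edges_subset_edgeSet _ he'')⟩
    have : (fromEdgeSet (↑(sU (F i)) : Set (Sym2 V))).Reachable p q :=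
      ⟨(w0.toPath : (fromEdgeSet (↑(F i) : Set (Sym2 V))).Walk p q).transfer _ hsubT⟩
    exact (hCL3 (F, s(p, q)) hF i p q).mp this
  -- CL5 : all of U is connected in each filtered initial forest
  have hWalkD : ∀ (a b : V) (wd : GD.Walk a b) (i : Fin n),
      (fromEdgeSet (↑(sU (F0 i)) : Set (Sym2 V))).Reachable a b := by
    intro a b wd i
    induction wd with
    | nil => exact Reachable.refl _
    | @cons a2 b2 c2 h p ihw =>
      have haD : s(a2, b2) ∈ D := by
        rw [hGD] at h
        exact ((fromEdgeSet_adj _).mp h).1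
      exact (hCL4 _ haD i a2 b2 rfl).trans ihw
  -- counting
  have hx0U : x0 ∈ U := by
    rw [hU, Finset.mem_filter]
    exact ⟨Finset.mem_univ _, Reachable.refl _⟩
  have hUcard : ∀ i : Fin n, U.card ≤ (sU (F0 i)).card + 1 := by
    intro i
    refine card_le_of_connected (sU (F0 i)) U ?_ ?_ ?_
    · intro e he
      exact hdiag e (hF0v.1 i (Finset.filter_subset _ _ he))
    · intro e he v hv
      exact (Finset.mem_filter.mp he).2 v hv
    · intro u hu v hv
      have hr1 : (fromEdgeSet (↑(sU (F0 i)) : Set (Sym2 V))).Reachable x0 u := by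
        obtain ⟨wd⟩ := (Finset.mem_filter.mp hu).2
        exact hWalkD _ _ wd i
      have hr2 : (fromEdgeSet (↑(sU (F0 i)) : Set (Sym2 V))).Reachable x0 v := by
        obtain ⟨wd⟩ := (Finset.mem_filter.mp hv).2
        exact hWalkD _ _ wd i
      exact hr1.symm.trans hr2
  set EU := E.filter (fun e => ∀ v ∈ e, v ∈ U) with hEU
  have hEUden : EU.card ≤ n * (U.card - 1) := hden U ⟨x0, hx0U⟩
  set T := Finset.univ.biUnion (fun i : Fin n => sU (F0 i)) with hT
  have hTE : T ⊆ EU := by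
    intro d hd
    rw [hT, Finset.mem_biUnion] at hd
    obtain ⟨i, _, hd⟩ := hd
    rw [hEU, Finset.mem_filter]
    exact ⟨hF0v.1 i (Finset.filter_subset _ _ hd), (Finset.mem_filter.mp hd).2⟩
  have he0T : e0 ∉ T := by
    rw [hT, Finset.mem_biUnion]
    rintro ⟨i, _, hd⟩
    exact he0 i (Finset.filter_subset _ _ hd)
  have he0EU : e0 ∈ EU := by
    rw [hEU, Finset.mem_filter]
    exact ⟨he0E, hDU e0 he0D⟩
  have hTcard : T.card = ∑ i, (sU (F0 i)).card := by
    rw [hT]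
    exact Finset.card_biUnion (fun i _ j _ hij =>
      Disjoint.mono (Finset.filter_subset _ _) (Finset.filter_subset _ _) (hF0v.2.2 i j hij))
  have hinsT : (insert e0 T).card = T.card + 1 := Finset.card_insert_of_notMem he0T
  have hsubT2 : insert e0 T ⊆ EU := by
    intro d hd
    rcases Finset.mem_insert.mp hd with rfl | hd
    · exact he0EU
    · exact hTE hd
  have hUc1 : 1 ≤ U.card := Finset.card_pos.mpr ⟨x0, hx0U⟩
  have hsum : n * (U.card - 1) ≤ ∑ i, (sU (F0 i)).card := by
    calc n * (U.card - 1) = ∑ _i : Fin n, (U.card - 1) := by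
          rw [Finset.sum_const, Finset.card_univ, Fintype.card_fin, smul_eq_mul]
      _ ≤ ∑ i, (sU (F0 i)).card := Finset.sum_le_sum (fun i _ => by
          have := hUcard i
          omega)
  have hfinal := Finset.card_le_card hsubT2
  omega

end PFAux

namespace PFAux

open scoped Classical

variable {V : Type*} [DecidableEq V] [Fintype V]

def IsPseudoforestSet' (P : Set (Sym2 V)) : Prop := GraphIsPseudoforest (fromEdgeSet P)

/-- The density bound coming from a pseudoforest partition. -/
lemma density_bound (G : SimpleGraph V) (k : ℕ) (P : Fin k → Set (Sym2 V))
    (hPf : ∀ i, GraphIsPseudoforest (fromEdgeSet (P i)))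
    (hPunion : (⋃ i, P i) = G.edgeSet) (U : Finset V) :
    (G.edgeFinset.filter (fun e => ∀ v ∈ e, v ∈ U)).card ≤ k * U.card := by
  set EUf := G.edgeFinset.filter (fun e => ∀ v ∈ e, v ∈ U) with hEUf
  set Qi : Fin k → Finset (Sym2 V) := fun i => EUf.filter (fun e => e ∈ P i) with hQi
  have hsub : EUf ⊆ Finset.univ.biUnion Qi := by
    intro e he
    have heE : e ∈ G.edgeSet := mem_edgeFinset.mp (Finset.filter_subset _ _ he)
    rw [← hPunion] at heE
    obtain ⟨i, hi⟩ := Set.mem_iUnion.mp heE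
    rw [Finset.mem_biUnion]
    exact ⟨i, Finset.mem_univ _, Finset.mem_filter.mpr ⟨he, hi⟩⟩
  have hQicard : ∀ i, (Qi i).card ≤ U.card := by
    intro i
    have hdiag : ∀ e ∈ Qi i, ¬ e.IsDiag := by
      intro e he
      exact G.not_isDiag_of_mem_edgeSet
        (mem_edgeFinset.mp (Finset.filter_subset _ _ ((Finset.filter_subset _ _) he)))
    have hpf : GraphIsPseudoforest (fromEdgeSet (↑(Qi i) : Set (Sym2 V))) := by
      refine pseudoforest_anti (fromEdgeSet_mono ?_) (hPf i)
      intro e he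
      exact (Finset.mem_filter.mp (Finset.mem_coe.mp he)).2
    have h1 := pseudoforest_card (Qi i) hdiag hpf
    have h2 : supp (Qi i) ⊆ U := by
      intro v hv
      obtain ⟨e, he, hve⟩ := mem_supp.mp hv
      exact (Finset.mem_filter.mp (Finset.filter_subset _ _ he)).2 v hve
    exact h1.trans (Finset.card_le_card h2)
  calc EUf.card ≤ (Finset.univ.biUnion Qi).card := Finset.card_le_card hsub
    _ ≤ ∑ i, (Qi i).card := Finset.card_biUnion_le
    _ ≤ ∑ _i : Fin k, U.card := Finset.sum_le_sum (fun i _ => hQicard i)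
    _ = k * U.card := by rw [Finset.sum_const, Finset.card_univ, Fintype.card_fin, smul_eq_mul]

/-- The trivial bound : edges inside `U` are at most `|U| choose 2`. -/
lemma choose_bound (G : SimpleGraph V) (U : Finset V) :
    (G.edgeFinset.filter (fun e => ∀ v ∈ e, v ∈ U)).card ≤ U.card.choose 2 := by
  rw [← Finset.card_powersetCard 2 U]
  refine Finset.card_le_card_of_injOn (fun e => U.filter (fun v => v ∈ e)) ?_ ?_
  · intro e he
    rw [Finset.mem_coe, Finset.mem_filter] at he
    obtain ⟨a, b, rfl⟩ := sym2_exists_eq e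
    have hab : a ≠ b := by
      intro h
      exact G.not_isDiag_of_mem_edgeSet (mem_edgeFinset.mp he.1) (by simp [h])
    have haU : a ∈ U := he.2 a (by simp)
    have hbU : b ∈ U := he.2 b (by simp)
    have : U.filter (fun v => v ∈ s(a, b)) = {a, b} := by
      ext v
      simp only [Finset.mem_filter, Sym2.mem_iff, Finset.mem_insert, Finset.mem_singleton]
      constructor
      · rintro ⟨_, h⟩; exact h
      · rintro (rfl | rfl)
        · exact ⟨haU, Or.inl rfl⟩
        · exact ⟨hbU, Or.inr rfl⟩
    rw [Finset.mem_coe, Finset.mem_powersetCard]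
    dsimp only
    rw [this]
    constructor
    · intro v hv
      rcases Finset.mem_insert.mp hv with rfl | hv
      · exact haU
      · exact (Finset.mem_singleton.mp hv) ▸ hbU
    · rw [Finset.card_insert_of_notMem (by simp [hab]), Finset.card_singleton]
  · intro e he e' he' heq
    rw [Finset.coe_filter] at he he'
    simp only [Set.mem_setOf_eq] at he he'
    dsimp only at heq
    refine Sym2.ext (fun v => ?_)
    constructor
    · intro hv
      have hvU : v ∈ U := he.2 v hv
      have : v ∈ U.filter (fun x => x ∈ e) := Finset.mem_filter.mpr ⟨hvU, hv⟩
      rw [heq] at this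
      exact (Finset.mem_filter.mp this).2
    · intro hv
      have hvU : v ∈ U := he'.2 v hv
      have : v ∈ U.filter (fun x => x ∈ e') := Finset.mem_filter.mpr ⟨hvU, hv⟩
      rw [← heq] at this
      exact (Finset.mem_filter.mp this).2

end PFAux


/-- If the edge set of a finite simple graph is partitioned into `k` pseudoforests, then
it can be partitioned into `⌈4k/3⌉` forests. -/
theorem pseudoforests_to_four_thirds_forests {V : Type*} [Fintype V] [DecidableEq V]
    (G : SimpleGraph V) (k : ℕ) (P : Fin k → Set (Sym2 V))
    (hP : IsPseudoforestPartition G k P) :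
    ∃ F : Fin ⌈(4 * k : ℚ) / 3⌉₊ → Set (Sym2 V),
      IsForestPartition G ⌈(4 * k : ℚ) / 3⌉₊ F := by
  open PFAux in
  classical
  obtain ⟨hPf, hPdisj, hPunion⟩ := hP
  rcases Nat.eq_zero_or_pos k with rfl | hk
  · -- no pseudoforests : no edges at all
    have hE0 : G.edgeSet = ∅ := by
      rw [← hPunion]
      exact Set.iUnion_of_empty _
    refine ⟨fun _ => ∅, fun i => ?_, fun i j _ => by simp, ?_⟩
    · show IsForestSet (∅ : Set (Sym2 V))
      unfold IsForestSet
      rw [fromEdgeSet_empty]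
      exact isAcyclic_bot
    · rw [hE0]
      simp
  · set n := ⌈(4 * k : ℚ) / 3⌉₊ with hndef
    have h1 : ((4 * k : ℚ)) / 3 ≤ (n : ℚ) := Nat.le_ceil _
    have h2 : (4 * k : ℚ) ≤ (n : ℚ) * 3 := (div_le_iff₀ (by norm_num)).mp h1
    have h3n : 4 * k ≤ 3 * n := by
      have : (4 * k : ℚ) ≤ (3 * n : ℚ) := by push_cast; linarith
      exact_mod_cast this
    have hnpos : 0 < n := by omega
    have hn2 : 2 ≤ n := by omega
    -- density condition for Nash-Williams
    have hden : ∀ U : Finset V, U.Nonempty →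
        (G.edgeFinset.filter (fun e => ∀ v ∈ e, v ∈ U)).card ≤ n * (U.card - 1) := by
      intro U hUne
      have hb1 := density_bound G k P (fun i => hPf i) hPunion U
      have hb2 := choose_bound G U
      have hU1 : 1 ≤ U.card := Finset.card_pos.mpr hUne
      by_cases hU4 : 4 ≤ U.card
      · -- use the pseudoforest density bound
        have hkey : k * U.card ≤ n * (U.card - 1) := by
          have hs : 3 * U.card ≤ 4 * (U.card - 1) := by omega
          have e1 : 3 * (k * U.card) = k * (3 * U.card) := by ring
          have e2 : k * (3 * U.card) ≤ k * (4 * (U.card - 1)) := Nat.mul_le_mul_left k hs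
          have e3 : k * (4 * (U.card - 1)) = (4 * k) * (U.card - 1) := by ring
          have e4 : (4 * k) * (U.card - 1) ≤ (3 * n) * (U.card - 1) :=
            Nat.mul_le_mul_right _ h3n
          have e5 : (3 * n) * (U.card - 1) = 3 * (n * (U.card - 1)) := by ring
          omega
        exact hb1.trans hkey
      · -- small U : use the binomial bound
        have h3 : U.card = 1 ∨ U.card = 2 ∨ U.card = 3 := by omega
        rcases h3 with h3 | h3 | h3 <;> rw [h3] at hb2 ⊢ <;>
          simp only [Nat.choose] at hb2 <;> omega
    obtain ⟨F, hFacyc, hFdisj, hFsub, hFcov⟩ := nash_williams G.edgeFinset n hnpos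
      (fun e he => G.not_isDiag_of_mem_edgeSet (mem_edgeFinset.mp he)) hden
    refine ⟨fun i => (↑(F i) : Set (Sym2 V)), fun i => hFacyc i, ?_, ?_⟩
    · intro i j hij
      exact Finset.disjoint_coe.mpr (hFdisj i j hij)
    · ext e
      simp only [Set.mem_iUnion, Finset.mem_coe]
      constructor
      · rintro ⟨i, hi⟩
        exact mem_edgeFinset.mp (hFsub i hi)
      · intro he
        exact hFcov e (mem_edgeFinset.mpr he)
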